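/- If (I0,J0) are the meet-irreducibles above and join-irreducibles below an element c of a finite lattice, then (I0,J0) is a maxbiclique of the irreducibles-comparability relation: no additional meet-irreducible or join-irreducible can be added while keeping every element of the lower part below every element of the upper part. -/
import Mathlib

lemma le_of_supIrred_le {L : Type*} [Finite L] [Lattice L] [OrderBot L] (x i : L)
    (h : ∀ j, SupIrred j → j ≤ x → j ≤ i) : x ≤ i := by
  obtain ⟨s, hs, hirr⟩ := exists_supIrred_decomposition x
  rw [← hs]
  exact Finset.sup_le fun b hb => h b (hirr hb) (hs ▸ Finset.le_sup (f := id) hb)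

lemma ge_of_infIrred_ge {L : Type*} [Finite L] [Lattice L] [OrderTop L] (x j : L)
    (h : ∀ i, InfIrred i → x ≤ i → j ≤ i) : j ≤ x := by
  obtain ⟨s, hs, hirr⟩ := exists_infIrred_decomposition x
  rw [← hs]
  exact Finset.le_inf fun b hb => h b (hirr hb) (hs ▸ Finset.inf_le (f := id) hb)

/-- For an element `c` of a finite lattice, the pair of all meet-irreducibles above `c`
and all join-irreducibles below `c` is a maxbiclique of the irreducibles-comparability
relation: it is an induced biclique, and it cannot be enlarged. -/
theorem stmt6 {L : Type*} [Fintype L] [Lattice L] [BoundedOrder L] (c : L)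
    (A B : Set L) (hA : A = {i | InfIrred i ∧ c ≤ i}) (hB : B = {j | SupIrred j ∧ j ≤ c}) :
    (∀ i ∈ A, ∀ j ∈ B, j ≤ i) ∧
    ∀ A' B' : Set L, A ⊆ A' → B ⊆ B' →
      (∀ i ∈ A', InfIrred i) → (∀ j ∈ B', SupIrred j) →
      (∀ i ∈ A', ∀ j ∈ B', j ≤ i) → A' = A ∧ B' = B := by
  subst hA hB
  refine ⟨fun i hi j hj => hj.2.trans hi.2, fun A' B' hAA hBB hA' hB' hbic => ?_⟩
  constructor
  · refine Set.Subset.antisymm (fun i hi => ⟨hA' i hi, ?_⟩) hAA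
    exact le_of_supIrred_le c i fun j hjirr hjc => hbic i hi j (hBB ⟨hjirr, hjc⟩)
  · refine Set.Subset.antisymm (fun j hj => ⟨hB' j hj, ?_⟩) hBB
    exact ge_of_infIrred_ge c j fun i hiirr hci => hbic i (hAA ⟨hiirr, hci⟩) j hj
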